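/- arXiv:2511.07792 — 3 statements merged into one kernel-verified Lean document; each statement's English description precedes it below -/
import Mathlib

section
/- Let K be a field complete with respect to a nontrivial nonarchimedean absolute value, and let E be a metrizable topological K-vector space. Let o = {c ∈ K : |c| ≤ 1} be the unit ball of K. If L ⊆ E is an o-submodule (that is, 0 ∈ L, L is closed under addition, and c • L ⊆ L for every c ∈ K with |c| ≤ 1) which absorbs every von Neumann bounded subset of E, then L is a neighborhood of 0 in E. (This is part (i) of the paper's lemma stating that for metrizable W the counit W^{bt} → W is an isomorphism, i.e. the topology of bornivorous o-submodules of the von Neumann bornology recovers the original topology.) -/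
open Pointwise

/-- Let `K` be a field complete with respect to a nontrivial
nonarchimedean absolute value, with unit ball `o = {c : ‖c‖ ≤ 1}`, and let `E` be a
metrizable topological `K`-vector space.  If `L ⊆ E` is an `o`-submodule
(`0 ∈ L`, closed under addition, stable under scalars of norm at most `1`)
which absorbs every von Neumann bounded subset of `E` (in the sense that for every
bounded `B` there is a nonzero scalar `c` with `B ⊆ c • L`), then `L` is a
neighbourhood of `0` in `E`. -/
theorem bornivorous_lattice_mem_nhds_zero
    {K : Type*} [NontriviallyNormedField K] [CompleteSpace K] [IsUltrametricDist K]
    {E : Type*} [AddCommGroup E] [Module K E] [TopologicalSpace E]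
    [IsTopologicalAddGroup E] [ContinuousSMul K E] [TopologicalSpace.MetrizableSpace E]
    (L : Set E)
    (h0 : (0 : E) ∈ L)
    (hadd : ∀ x ∈ L, ∀ y ∈ L, x + y ∈ L)
    (hsmul : ∀ c : K, ‖c‖ ≤ 1 → ∀ x ∈ L, c • x ∈ L)
    (habs : ∀ B : Set E, Bornology.IsVonNBounded K B → ∃ c : K, c ≠ 0 ∧ B ⊆ c • L) :
    L ∈ nhds (0 : E) := by
  by_contra hL
  obtain ⟨c, hc⟩ := NormedField.exists_one_lt_norm K
  have hc0 : c ≠ 0 := by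
    intro h; rw [h, norm_zero] at hc; linarith
  -- c^n • L is not a neighborhood of 0
  have hcn : ∀ n : ℕ, (c ^ n) • L ∉ nhds (0 : E) := by
    intro n hn
    exact hL ((set_smul_mem_nhds_zero_iff (pow_ne_zero n hc0)).mp hn)
  letI := TopologicalSpace.metrizableSpaceMetric E
  -- countable antitone basis of nhds 0
  obtain ⟨U, hU⟩ := (nhds (0 : E)).exists_antitone_basis
  -- pick x n ∈ U n \ c^n • L
  have hx : ∀ n : ℕ, ∃ x, x ∈ U n ∧ x ∉ (c ^ n) • L := by
    intro n
    by_contra h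
    push_neg at h
    exact hcn n (Filter.mem_of_superset (hU.mem n) h)
  choose x hxU hxL using hx
  have hx0 : Filter.Tendsto x Filter.atTop (nhds (0 : E)) :=
    hU.tendsto hxU
  obtain ⟨a, ha0, haL⟩ := habs _ (hx0.isVonNBounded_range K)
  -- choose n with ‖a‖ ≤ ‖c‖^n
  obtain ⟨n, hn⟩ := pow_unbounded_of_one_lt ‖a‖ hc
  apply hxL n
  have := haL (Set.mem_range_self n)
  obtain ⟨y, hy, hxy⟩ := this
  refine ⟨((c ^ n)⁻¹ * a) • y, hsmul _ ?_ y hy, ?_⟩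
  · rw [norm_mul, norm_inv, norm_pow]
    rw [inv_mul_le_iff₀ (by positivity)]
    simpa using hn.le
  · show (c ^ n) • (((c ^ n)⁻¹ * a) • y) = x n
    rw [smul_smul, ← mul_assoc, mul_inv_cancel₀ (pow_ne_zero n hc0), one_mul]
    exact hxy
end

section
/- Let K be a field complete with respect to a nontrivial nonarchimedean absolute value, and let E be a complete metrizable topological K-vector space (a K-Fréchet space). Then for every countable family (B_n)_{n ∈ ℕ} of von Neumann bounded subsets of E there exists a von Neumann bounded subset B' of E which absorbs every B_n; that is, for each n there is a nonzero scalar c_n ∈ K with B_n ⊆ c_n • B'. Equivalently, the preorder of von Neumann bounded subsets of E ordered by absorption is countably directed (ℵ₁-filtered), i.e. the von Neumann bornology of a Fréchet space is metrizable in the bornological sense. (This is the part of the paper's Lemma on Fréchet spaces proved there, attributed to Mackey: one may take B' to be generated by a suitable sum ∑_n λ_n B_n with λ_n B_n contained in the n-th member of a decreasing fundamental system of lattice neighborhoods of 0.) -/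
open Pointwise Filter Topology

private lemma absorbs_smul_right_aux {K E : Type*} [NontriviallyNormedField K]
    [AddCommGroup E] [Module K E] {s t : Set E} {a : K} (ha : a ≠ 0)
    (h : Absorbs K s t) : Absorbs K s (a • t) := by
  rw [absorbs_iff_norm] at h ⊢
  obtain ⟨r, hr⟩ := h
  refine ⟨‖a‖ * max r 1, fun c hc => ?_⟩
  have hc0 : c ≠ 0 := by
    intro h0
    rw [h0, norm_zero] at hc
    have : (0:ℝ) < ‖a‖ * max r 1 :=
      mul_pos (norm_pos_iff.mpr ha) (lt_of_lt_of_le one_pos (le_max_right r 1))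
    linarith
  rw [Set.smul_set_subset_iff₀ ha, smul_smul]
  apply hr
  rw [norm_mul, norm_inv]
  rw [← le_div_iff₀' (norm_pos_iff.mpr ha)] at hc
  calc r ≤ max r 1 := le_max_left r 1
    _ ≤ ‖a‖⁻¹ * ‖c‖ := by rwa [inv_mul_eq_div]

/-- Mackey; cf. the paper's Lemma on Fréchet spaces.  Let `K` be a field
complete with respect to a nontrivial nonarchimedean absolute value and let `E` be a
complete metrizable topological `K`-vector space (a `K`-Fréchet space).  Then for every
countable family `(B n)` of von Neumann bounded subsets of `E` there is a von Neumann
bounded subset `B'` of `E` absorbing every `B n`: for each `n` there is a nonzero scalar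
`c : K` with `B n ⊆ c • B'`.  In other words the von Neumann bornology of a Fréchet
space is countably directed under absorption (metrizable in the bornological sense). -/
theorem exists_vonNBounded_absorbing_of_countable
    {K : Type*} [NontriviallyNormedField K] [CompleteSpace K] [IsUltrametricDist K]
    {E : Type*} [AddCommGroup E] [Module K E] [UniformSpace E] [IsUniformAddGroup E]
    [ContinuousSMul K E] [TopologicalSpace.MetrizableSpace E] [CompleteSpace E]
    (B : ℕ → Set E) (hB : ∀ n, Bornology.IsVonNBounded K (B n)) :
    ∃ B' : Set E, Bornology.IsVonNBounded K B' ∧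
      ∀ n, ∃ c : K, c ≠ 0 ∧ B n ⊆ c • B' := by
  -- countable antitone basis of neighborhoods of 0
  obtain ⟨V, hV⟩ := (𝓝 (0 : E)).exists_antitone_basis
  set W : ℕ → Set E := fun n => balancedCore K (V n) with hWdef
  have hWnhds : ∀ n, W n ∈ 𝓝 (0 : E) :=
    fun n => balancedCore_mem_nhds_zero (hV.toHasBasis.mem_of_mem trivial)
  have hWanti : ∀ {m n : ℕ}, m ≤ n → W n ⊆ W m :=
    fun {m n} h =>
      (balancedCore_balanced (V n)).subset_balancedCore_of_subset
        ((balancedCore_subset (V n)).trans (hV.antitone h))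
  -- choose scalars c n with B n ⊆ c n • W n
  have key : ∀ n, ∃ c : K, c ≠ 0 ∧ B n ⊆ c • W n := by
    intro n
    obtain ⟨r, hr⟩ := absorbs_iff_norm.mp (hB n (hWnhds n))
    obtain ⟨c, hc⟩ := NormedField.exists_lt_norm K (max r 1)
    refine ⟨c, ?_, hr c (le_of_lt (lt_of_le_of_lt (le_max_left r 1) hc))⟩
    intro h0
    rw [h0, norm_zero] at hc
    exact absurd (lt_trans one_pos (lt_of_le_of_lt (le_max_right r 1) hc)) (lt_irrefl 0)
  choose c hc0 hcB using key
  refine ⟨⋃ n, (c n)⁻¹ • B n, ?_, fun n => ⟨c n, hc0 n, ?_⟩⟩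
  · -- boundedness
    intro U hU
    obtain ⟨k, -, hk⟩ := hV.toHasBasis.mem_iff.mp hU
    have hsub : (⋃ n, (c n)⁻¹ • B n) ⊆
        (⋃ n ∈ Set.Iio k, (c n)⁻¹ • B n) ∪ W k := by
      intro x hx
      obtain ⟨n, hn⟩ := Set.mem_iUnion.mp hx
      rcases lt_or_ge n k with h | h
      · exact Or.inl (Set.mem_biUnion h hn)
      · exact Or.inr (hWanti h ((Set.subset_smul_set_iff₀ (hc0 n)).mp (hcB n) hn))
    refine Absorbs.mono_right ?_ hsub
    refine Absorbs.union ?_ ?_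
    · exact (Set.finite_Iio k).absorbs_biUnion.mpr fun n _ =>
        absorbs_smul_right_aux (inv_ne_zero (hc0 n)) (hB n hU)
    · exact ((balancedCore_balanced (V k)).absorbs_self).mono_left
        ((balancedCore_subset (V k)).trans hk)
  · -- B n ⊆ c n • B'
    rw [Set.subset_smul_set_iff₀ (hc0 n)]
    exact Set.subset_iUnion (fun m => (c m)⁻¹ • B m) n
end

section
/- Let K be a normed field and let S and S' be sets (regarded as discrete topological spaces). For φ ∈ c₀(S) and ψ ∈ c₀(S'), the function φ ⊠ ψ : S × S' → K defined by (φ ⊠ ψ)(s, s') = φ(s)·ψ(s') lies in c₀(S × S') and satisfies ‖φ ⊠ ψ‖ = ‖φ‖·‖ψ‖. Moreover, the K-linear span of the set {φ ⊠ ψ : φ ∈ c₀(S), ψ ∈ c₀(S')} is dense in c₀(S × S'). (This is the normed-space content of the paper's isomorphism c₀(S) ⊗̂_K c₀(S') ≅ c₀(S × S').) -/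
open scoped ZeroAtInfty

open Filter ZeroAtInftyContinuousMap Topology
open scoped Classical

section aux

variable (K : Type*) [NormedField K]

/-- indicator of a point as a `C₀` function on a discrete space -/
noncomputable def c0single (α : Type*) [TopologicalSpace α] [DiscreteTopology α]
    (a : α) : C₀(α, K) :=
  { toFun := fun x => if x = a then (1 : K) else 0
    continuous_toFun := continuous_of_discreteTopology
    zero_at_infty' := by
      rw [cocompact_eq_cofinite]
      refine tendsto_nhds_of_eventually_eq ?_
      filter_upwards [(Set.finite_singleton a).eventually_cofinite_notMem] with x hx
      exact if_neg (by simpa using hx) }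

lemma c0single_apply {α : Type*} [TopologicalSpace α] [DiscreteTopology α] (a x : α) :
    c0single K α a x = if x = a then (1 : K) else 0 := rfl

lemma finite_of_norm_ge {α : Type*} [TopologicalSpace α] [DiscreteTopology α]
    (f : C₀(α, K)) {ε : ℝ} (hε : 0 < ε) : {x : α | ε ≤ ‖f x‖}.Finite := by
  have h := f.zero_at_infty'
  rw [cocompact_eq_cofinite] at h
  have := (h.eventually (Metric.ball_mem_nhds (0 : K) hε))
  rw [eventually_cofinite] at this
  refine this.subset ?_
  intro x hx
  simp only [Set.mem_setOf_eq, Metric.mem_ball, dist_zero_right, not_lt]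
  exact hx

lemma c0_norm_le {α : Type*} [TopologicalSpace α] (f : C₀(α, K)) {C : ℝ} (hC : 0 ≤ C)
    (h : ∀ x, ‖f x‖ ≤ C) : ‖f‖ ≤ C := by
  rw [← norm_toBCF_eq_norm]
  exact (BoundedContinuousFunction.norm_le hC).2 h

lemma c0_norm_apply_le {α : Type*} [TopologicalSpace α] (f : C₀(α, K)) (x : α) :
    ‖f x‖ ≤ ‖f‖ := by
  rw [← norm_toBCF_eq_norm]
  exact f.toBCF.norm_coe_le_norm x

end aux

/-- For a normed field `K` and sets `S`, `S'` (with the discrete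
topology): for `φ ∈ c₀(S)` and `ψ ∈ c₀(S')` the exterior product
`φ ⊠ ψ : (s, s') ↦ φ s * ψ s'` lies in `c₀(S × S')` and has norm `‖φ‖ * ‖ψ‖`;
moreover the `K`-linear span of such exterior products is dense in `c₀(S × S')`.
(This is the normed-space content of `c₀(S) ⊗̂_K c₀(S') ≅ c₀(S × S')`.) -/
theorem zeroAtInfty_extProduct_and_span_dense
    (K : Type*) [NormedField K]
    (S S' : Type*) [TopologicalSpace S] [DiscreteTopology S]
    [TopologicalSpace S'] [DiscreteTopology S'] :
    (∀ (φ : C₀(S, K)) (ψ : C₀(S', K)), ∃ π : C₀(S × S', K),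
        (∀ (s : S) (s' : S'), π (s, s') = φ s * ψ s') ∧ ‖π‖ = ‖φ‖ * ‖ψ‖) ∧
    Dense (↑(Submodule.span K
        {π : C₀(S × S', K) | ∃ (φ : C₀(S, K)) (ψ : C₀(S', K)),
          ∀ (s : S) (s' : S'), π (s, s') = φ s * ψ s'}) : Set C₀(S × S', K)) := by
  constructor
  · intro φ ψ
    -- construct the exterior product
    have hza : Tendsto (fun p : S × S' => φ p.1 * ψ p.2) (cocompact (S × S')) (𝓝 0) := by
      rw [cocompact_eq_cofinite]
      rw [Metric.tendsto_nhds]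
      intro ε hε
      rw [eventually_cofinite]
      have hsub : {p : S × S' | ¬ dist (φ p.1 * ψ p.2) 0 < ε} ⊆
          {s : S | ε / (‖ψ‖ + 1) ≤ ‖φ s‖} ×ˢ {s' : S' | ε / (‖φ‖ + 1) ≤ ‖ψ s'‖} := by
        rintro ⟨s, s'⟩ hp
        simp only [Set.mem_setOf_eq, dist_zero_right, not_lt, norm_mul] at hp
        have hφ : ‖φ s‖ ≤ ‖φ‖ := c0_norm_apply_le K φ s
        have hψ : ‖ψ s'‖ ≤ ‖ψ‖ := c0_norm_apply_le K ψ s'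
        have hφ0 : (0:ℝ) ≤ ‖φ‖ := (norm_nonneg _).trans hφ
        have hψ0 : (0:ℝ) ≤ ‖ψ‖ := (norm_nonneg _).trans hψ
        constructor
        · show ε / (‖ψ‖ + 1) ≤ ‖φ s‖
          rw [div_le_iff₀ (by linarith)]
          calc ε ≤ ‖φ s‖ * ‖ψ s'‖ := hp
            _ ≤ ‖φ s‖ * (‖ψ‖ + 1) := by
                have := norm_nonneg (φ s); nlinarith
        · show ε / (‖φ‖ + 1) ≤ ‖ψ s'‖
          rw [div_le_iff₀ (by linarith)]
          calc ε ≤ ‖φ s‖ * ‖ψ s'‖ := hp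
            _ = ‖ψ s'‖ * ‖φ s‖ := mul_comm _ _
            _ ≤ ‖ψ s'‖ * (‖φ‖ + 1) := by
                have := norm_nonneg (ψ s'); nlinarith
      refine Set.Finite.subset (Set.Finite.prod ?_ ?_) hsub
      · exact finite_of_norm_ge K φ (by positivity)
      · exact finite_of_norm_ge K ψ (by positivity)
    set π : C₀(S × S', K) :=
      { toFun := fun p => φ p.1 * ψ p.2
        continuous_toFun := continuous_of_discreteTopology
        zero_at_infty' := hza } with hπ
    refine ⟨π, fun s s' => rfl, ?_⟩
    have hπle : ∀ s s', ‖φ s‖ * ‖ψ s'‖ ≤ ‖π‖ := by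
      intro s s'
      rw [← norm_mul]
      exact c0_norm_apply_le K π (s, s')
    apply le_antisymm
    · apply c0_norm_le K π (by positivity)
      rintro ⟨s, s'⟩
      show ‖φ s * ψ s'‖ ≤ ‖φ‖ * ‖ψ‖
      rw [norm_mul]
      exact mul_le_mul (c0_norm_apply_le K φ s) (c0_norm_apply_le K ψ s')
        (norm_nonneg _) (norm_nonneg _)
    · -- ‖φ‖ * ‖ψ‖ ≤ ‖π‖
      have step1 : ∀ s', ‖φ‖ * ‖ψ s'‖ ≤ ‖π‖ := by
        intro s'
        rcases eq_or_lt_of_le (norm_nonneg (ψ s')) with h0 | h0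
        · rw [← h0, mul_zero]; exact norm_nonneg _
        · rw [← le_div_iff₀ h0]
          apply c0_norm_le K φ (by positivity)
          intro s
          rw [le_div_iff₀ h0]
          exact hπle s s'
      rcases eq_or_lt_of_le (norm_nonneg φ) with h0 | h0
      · rw [← h0, zero_mul]; exact norm_nonneg _
      · rw [mul_comm, ← le_div_iff₀ h0]
        apply c0_norm_le K ψ (by positivity)
        intro s'
        rw [le_div_iff₀ h0, mul_comm]
        exact step1 s'
  · -- density
    rw [Metric.dense_iff]
    intro f ε hε
    have hT : {p : S × S' | ε / 2 ≤ ‖f p‖}.Finite := finite_of_norm_ge K f (by positivity)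
    set T := hT.toFinset with hTdef
    set g : C₀(S × S', K) := ∑ p ∈ T, f p • c0single K (S × S') p with hg
    have hmem : g ∈ Submodule.span K
        {π : C₀(S × S', K) | ∃ (φ : C₀(S, K)) (ψ : C₀(S', K)),
          ∀ (s : S) (s' : S'), π (s, s') = φ s * ψ s'} := by
      apply Submodule.sum_mem
      intro p _
      apply Submodule.smul_mem
      apply Submodule.subset_span
      refine ⟨c0single K S p.1, c0single K S' p.2, fun s s' => ?_⟩
      simp only [c0single_apply]
      by_cases h1 : s = p.1 <;> by_cases h2 : s' = p.2 <;>
        simp [Prod.ext_iff, h1, h2]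
    have hgapply : ∀ q : S × S', g q = if q ∈ T then f q else 0 := by
      intro q
      have : g q = ∑ p ∈ T, f p • (c0single K (S × S') p q) := by
        rw [hg]
        induction T using Finset.induction with
        | empty => simp
        | insert hp ih => simp_all
      rw [this]
      simp only [c0single_apply, smul_eq_mul, mul_ite, mul_one, mul_zero]
      rw [Finset.sum_ite_eq]
    refine ⟨g, ?_, hmem⟩
    rw [Metric.mem_ball, dist_eq_norm]
    have : ‖g - f‖ ≤ ε / 2 := by
      apply c0_norm_le K _ (by positivity)
      intro q
      have : (g - f) q = g q - f q := rfl
      rw [this, hgapply q]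
      by_cases hq : q ∈ T
      · rw [if_pos hq, sub_self, norm_zero]; positivity
      · rw [if_neg hq, zero_sub, norm_neg]
        have : ¬ ε / 2 ≤ ‖f q‖ := by
          intro h
          exact hq (hT.mem_toFinset.2 h)
        linarith
    linarith
end
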